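/- Let 1 ≤ p_A, p_B, p_H ≤ ∞ with p_H ≤ max{p_A, p_B}, and let a, b ∈ ℝ^d satisfy αᵀa ≤ β and αᵀb > β. Then inf_{x, y ∈ 𝓗} ( ‖x − a‖_{p_A} + ‖x − y‖_{p_H} + ‖y − b‖_{p_B} ) = inf_{x ∈ 𝓗} ( ‖x − a‖_{p_A} + ‖x − b‖_{p_B} ); that is, the shortest path between a and b crosses the hyperplane at a single point and gains nothing by traveling along 𝓗. -/
import Mathlib

open scoped ENNReal BigOperators

/-- The `ℓ_p` norm on `ℝ^d` for `p : ℝ≥0∞` (intended for `1 ≤ p ≤ ∞`). -/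
noncomputable def lpNorm {d : ℕ} (p : ℝ≥0∞) (x : Fin d → ℝ) : ℝ :=
  if p = ∞ then ⨆ k, |x k| else (∑ k, |x k| ^ p.toReal) ^ (1 / p.toReal)

lemma lpNorm_eq_norm' {d : ℕ} (p : ℝ≥0∞) [hf : Fact (1 ≤ p)]
    (x : PiLp p (fun _ : Fin d => ℝ)) :
    lpNorm p ((WithLp.equiv p _) x) = ‖x‖ := by
  rcases eq_or_ne p ∞ with h | h
  · subst h
    rw [lpNorm, if_pos rfl, PiLp.norm_eq_ciSup]
    simp [Real.norm_eq_abs]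
  · rw [lpNorm, if_neg h, PiLp.norm_eq_sum (ENNReal.toReal_pos (by
      intro h0; rw [h0] at hf; exact absurd hf.out (by simp)) h)]
    simp [Real.norm_eq_abs]

lemma lpNorm_nonneg {d : ℕ} (p : ℝ≥0∞) (hp : 1 ≤ p) (x : Fin d → ℝ) : 0 ≤ lpNorm p x := by
  haveI : Fact (1 ≤ p) := ⟨hp⟩
  have h := lpNorm_eq_norm' p ((WithLp.equiv p (∀ _ : Fin d, ℝ)).symm x)
  rw [Equiv.apply_symm_apply] at h
  rw [h]; exact norm_nonneg _

lemma lpNorm_sub_self {d : ℕ} (p : ℝ≥0∞) (hp : 1 ≤ p) (x : Fin d → ℝ) :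
    lpNorm p (x - x) = 0 := by
  haveI : Fact (1 ≤ p) := ⟨hp⟩
  have h := lpNorm_eq_norm' p (0 : PiLp p (fun _ : Fin d => ℝ))
  simp only [sub_self]
  simpa using h

lemma lpNorm_neg {d : ℕ} (p : ℝ≥0∞) (hp : 1 ≤ p) (x : Fin d → ℝ) :
    lpNorm p (-x) = lpNorm p x := by
  haveI : Fact (1 ≤ p) := ⟨hp⟩
  have h1 := lpNorm_eq_norm' p (-(WithLp.equiv p (∀ _ : Fin d, ℝ)).symm x)
  have h2 := lpNorm_eq_norm' p ((WithLp.equiv p (∀ _ : Fin d, ℝ)).symm x)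
  rw [Equiv.apply_symm_apply] at h2
  rw [show (WithLp.equiv p (∀ _ : Fin d, ℝ)) (-(WithLp.equiv p _).symm x) = -x from rfl] at h1
  rw [h1, h2, norm_neg]

lemma lpNorm_triangle {d : ℕ} (p : ℝ≥0∞) (hp : 1 ≤ p) (x y z : Fin d → ℝ) :
    lpNorm p (x - z) ≤ lpNorm p (x - y) + lpNorm p (y - z) := by
  haveI : Fact (1 ≤ p) := ⟨hp⟩
  set X := (WithLp.equiv p (∀ _ : Fin d, ℝ)).symm x
  set Y := (WithLp.equiv p (∀ _ : Fin d, ℝ)).symm y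
  set Z := (WithLp.equiv p (∀ _ : Fin d, ℝ)).symm z
  have h1 : lpNorm p (x - z) = ‖X - Z‖ := lpNorm_eq_norm' p (X - Z)
  have h2 : lpNorm p (x - y) = ‖X - Y‖ := lpNorm_eq_norm' p (X - Y)
  have h3 : lpNorm p (y - z) = ‖Y - Z‖ := lpNorm_eq_norm' p (Y - Z)
  rw [h1, h2, h3]
  exact norm_sub_le_norm_sub_add_norm_sub X Y Z

lemma lpNorm_anti {d : ℕ} {p q : ℝ≥0∞} (hp : 1 ≤ p) (hpq : p ≤ q) (x : Fin d → ℝ) :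
    lpNorm q x ≤ lpNorm p x := by
  rcases eq_or_ne p ∞ with hpt | hpt
  · have : q = ∞ := top_le_iff.mp (hpt ▸ hpq)
    rw [hpt, this]
  have hpr : (1 : ℝ) ≤ p.toReal := by
    rw [← ENNReal.toReal_one]; exact ENNReal.toReal_mono hpt hp
  have hprpos : 0 < p.toReal := lt_of_lt_of_le one_pos hpr
  set S : ℝ := (∑ k, |x k| ^ p.toReal) ^ (1 / p.toReal) with hS
  have hsum_nonneg : 0 ≤ ∑ k, |x k| ^ p.toReal :=
    Finset.sum_nonneg fun k _ => Real.rpow_nonneg (abs_nonneg _) _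
  have hSnonneg : 0 ≤ S := Real.rpow_nonneg hsum_nonneg _
  have hSpow : S ^ p.toReal = ∑ k, |x k| ^ p.toReal := by
    rw [hS, ← Real.rpow_mul hsum_nonneg, one_div, inv_mul_cancel₀ (ne_of_gt hprpos),
      Real.rpow_one]
  have hxk : ∀ k, |x k| ≤ S := by
    intro k
    have h1 : |x k| ^ p.toReal ≤ ∑ j, |x j| ^ p.toReal :=
      Finset.single_le_sum (fun j _ => Real.rpow_nonneg (abs_nonneg _) _) (Finset.mem_univ k)
    calc |x k| = (|x k| ^ p.toReal) ^ (1 / p.toReal) := by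
          rw [← Real.rpow_mul (abs_nonneg _), mul_one_div, div_self (ne_of_gt hprpos),
            Real.rpow_one]
      _ ≤ S := Real.rpow_le_rpow (Real.rpow_nonneg (abs_nonneg _) _) h1 (by positivity)
  rcases eq_or_ne q ∞ with hqt | hqt
  · rw [lpNorm, if_pos hqt, lpNorm, if_neg hpt]
    exact Real.iSup_le hxk hSnonneg
  · have hqr : p.toReal ≤ q.toReal := ENNReal.toReal_mono hqt hpq
    have hqrpos : 0 < q.toReal := lt_of_lt_of_le hprpos hqr
    rw [lpNorm, if_neg hqt, lpNorm, if_neg hpt, ← hS]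
    have key : ∑ k, |x k| ^ q.toReal ≤ S ^ q.toReal := by
      have hstep : ∀ k ∈ Finset.univ,
          |x k| ^ q.toReal ≤ |x k| ^ p.toReal * S ^ (q.toReal - p.toReal) := by
        intro k _
        have hsplit : |x k| ^ q.toReal = |x k| ^ p.toReal * |x k| ^ (q.toReal - p.toReal) := by
          rw [← Real.rpow_add' (abs_nonneg _) (by simpa using ne_of_gt hqrpos)]
          congr 1; ring
        rw [hsplit]
        exact mul_le_mul_of_nonneg_left
          (Real.rpow_le_rpow (abs_nonneg _) (hxk k) (by linarith))
          (Real.rpow_nonneg (abs_nonneg _) _)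
      calc ∑ k, |x k| ^ q.toReal
          ≤ ∑ k, |x k| ^ p.toReal * S ^ (q.toReal - p.toReal) := Finset.sum_le_sum hstep
        _ = (∑ k, |x k| ^ p.toReal) * S ^ (q.toReal - p.toReal) := by rw [← Finset.sum_mul]
        _ = S ^ p.toReal * S ^ (q.toReal - p.toReal) := by rw [hSpow]
        _ = S ^ q.toReal := by
            rw [← Real.rpow_add' hSnonneg (by simpa using ne_of_gt hqrpos)]
            congr 1; ring
    calc (∑ k, |x k| ^ q.toReal) ^ (1 / q.toReal)
        ≤ (S ^ q.toReal) ^ (1 / q.toReal) :=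
          Real.rpow_le_rpow (by positivity) key (by positivity)
      _ = S := by
          rw [← Real.rpow_mul hSnonneg, one_div, mul_inv_cancel₀ (ne_of_gt hqrpos),
            Real.rpow_one]

/-- Lemma 11: if `p_H ≤ max{p_A, p_B}`, the shortest path between points on
opposite sides of the hyperplane gains nothing by traveling along `𝓗`: the
optimal two-gate value equals the optimal single-gate value. -/
theorem stmt_11 {d : ℕ} (pA pB pH : ℝ≥0∞) (hpA : 1 ≤ pA) (hpB : 1 ≤ pB) (hpH : 1 ≤ pH)
    (hmax : pH ≤ max pA pB)
    (α : Fin d → ℝ) (hα : α ≠ 0) (β : ℝ)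
    (a b : Fin d → ℝ) (ha : ∑ i, α i * a i ≤ β) (hb : β < ∑ i, α i * b i) :
    (⨅ xy : {z : (Fin d → ℝ) × (Fin d → ℝ) //
        (∑ i, α i * z.1 i = β) ∧ (∑ i, α i * z.2 i = β)},
      lpNorm pA (xy.1.1 - a) + lpNorm pH (xy.1.1 - xy.1.2) + lpNorm pB (xy.1.2 - b)) =
    ⨅ x : {x : Fin d → ℝ // ∑ i, α i * x i = β},
      lpNorm pA (x.1 - a) + lpNorm pB (x.1 - b) := by
  obtain ⟨i, hi⟩ := Function.ne_iff.mp hα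
  have hi' : α i ≠ 0 := by simpa using hi
  have hx0 : ∑ j, α j * (fun j => if j = i then β / α i else 0) j = β := by
    have : ∀ j, α j * (if j = i then β / α i else 0) = if j = i then α j * (β / α i) else 0 := by
      intro j; split <;> simp
    simp only [this, Finset.sum_ite_eq', Finset.mem_univ, if_true]
    field_simp
  set x0 : Fin d → ℝ := fun j => if j = i then β / α i else 0
  haveI hne1 : Nonempty {x : Fin d → ℝ // ∑ i, α i * x i = β} := ⟨⟨x0, hx0⟩⟩
  haveI hne2 : Nonempty {z : (Fin d → ℝ) × (Fin d → ℝ) //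
      (∑ i, α i * z.1 i = β) ∧ (∑ i, α i * z.2 i = β)} := ⟨⟨(x0, x0), hx0, hx0⟩⟩
  have bddL : BddBelow (Set.range fun xy : {z : (Fin d → ℝ) × (Fin d → ℝ) //
      (∑ i, α i * z.1 i = β) ∧ (∑ i, α i * z.2 i = β)} =>
      lpNorm pA (xy.1.1 - a) + lpNorm pH (xy.1.1 - xy.1.2) + lpNorm pB (xy.1.2 - b)) := by
    refine ⟨0, ?_⟩
    rintro v ⟨z, rfl⟩
    dsimp only
    have h1 := lpNorm_nonneg pA hpA (z.1.1 - a)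
    have h2 := lpNorm_nonneg pH hpH (z.1.1 - z.1.2)
    have h3 := lpNorm_nonneg pB hpB (z.1.2 - b)
    linarith
  have bddR : BddBelow (Set.range fun x : {x : Fin d → ℝ // ∑ i, α i * x i = β} =>
      lpNorm pA (x.1 - a) + lpNorm pB (x.1 - b)) := by
    refine ⟨0, ?_⟩
    rintro v ⟨z, rfl⟩
    dsimp only
    have h1 := lpNorm_nonneg pA hpA (z.1 - a)
    have h3 := lpNorm_nonneg pB hpB (z.1 - b)
    linarith
  apply le_antisymm
  · refine le_ciInf fun x => ?_
    refine ciInf_le_of_le bddL ⟨(x.1, x.1), x.2, x.2⟩ ?_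
    simp only
    rw [lpNorm_sub_self pH hpH]
    exact le_of_eq (by ring)
  · refine le_ciInf fun z => ?_
    obtain ⟨⟨x, y⟩, hx, hy⟩ := z
    simp only
    rcases le_max_iff.mp hmax with h | h
    · refine ciInf_le_of_le bddR ⟨y, hy⟩ ?_
      simp only
      have t1 : lpNorm pA (y - a) ≤ lpNorm pA (y - x) + lpNorm pA (x - a) :=
        lpNorm_triangle pA hpA y x a
      have t2 : lpNorm pA (y - x) ≤ lpNorm pH (y - x) := lpNorm_anti hpH h _
      have t3 : lpNorm pH (y - x) = lpNorm pH (x - y) := by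
        rw [← lpNorm_neg pH hpH (x - y), neg_sub]
      linarith
    · refine ciInf_le_of_le bddR ⟨x, hx⟩ ?_
      simp only
      have t1 : lpNorm pB (x - b) ≤ lpNorm pB (x - y) + lpNorm pB (y - b) :=
        lpNorm_triangle pB hpB x y b
      have t2 : lpNorm pB (x - y) ≤ lpNorm pH (x - y) := lpNorm_anti hpH h _
      linarith
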